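/- The inverse of the pessimistic sigmoid σ_pess(Δ) = e^{Δ/2}/(e^{Δ/2}+e^{-Δ/2}+λ) is given by σ_pess^{-1}(y) = 2·log( (λy + √(λ²y² + 4y - 4y²)) / (2(1-y)) ) for y ∈ (0,1): that is, σ_pess(σ_pess^{-1}(y)) = y for all y in (0,1) with λ²y² + 4y - 4y² > 0. -/

import Mathlib

open Real

/-- The stated formula inverts the pessimistic sigmoid: for `y ∈ (0,1)` with
`λ²y² + 4y - 4y² > 0`, setting
`g(y) = 2·log((λy + √(λ²y² + 4y - 4y²))/(2(1-y)))`, one has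
`σ_pess(g(y)) = y` where `σ_pess(Δ) = e^{Δ/2}/(e^{Δ/2}+e^{-Δ/2}+λ)`. -/
theorem pess_sigmoid_inverse (lam y : ℝ) (hlam : 0 ≤ lam)
    (hy : y ∈ Set.Ioo (0:ℝ) 1) (hD : 0 < lam^2 * y^2 + 4*y - 4*y^2) :
    let g : ℝ := 2 * log ((lam * y + Real.sqrt (lam^2 * y^2 + 4*y - 4*y^2)) / (2 * (1 - y)))
    exp (g/2) / (exp (g/2) + exp (-g/2) + lam) = y := by
  obtain ⟨hy0, hy1⟩ := hy
  intro g
  set s := Real.sqrt (lam^2 * y^2 + 4*y - 4*y^2) with hs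
  have hs2 : s^2 = lam^2 * y^2 + 4*y - 4*y^2 := Real.sq_sqrt hD.le
  have hspos : 0 < s := Real.sqrt_pos.mpr hD
  set u : ℝ := (lam * y + s) / (2 * (1 - y)) with hu
  have hupos : 0 < u := by
    apply div_pos
    · positivity
    · linarith
  have hg2 : g / 2 = Real.log u := by simp [g, hu, hs]
  have he1 : exp (g/2) = u := by rw [hg2, Real.exp_log hupos]
  have he2 : exp (-(g/2)) = u⁻¹ := by rw [← Real.exp_log hupos, ← Real.exp_neg, hg2]
  have : exp (-g/2) = u⁻¹ := by rw [neg_div]; exact he2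
  rw [he1, this]
  have hdenom : 0 < u + u⁻¹ + lam := by positivity
  have hquad : (1 - y) * u^2 - lam * y * u - y = 0 := by
    have h1y : (2 * (1 - y)) ≠ 0 := by intro h; nlinarith
    rw [hu]
    field_simp [hu]
    nlinarith [hs2]
  rw [div_eq_iff (ne_of_gt hdenom)]
  have hune : u ≠ 0 := ne_of_gt hupos
  field_simp at hquad ⊢
  nlinarith [hquad, hupos]
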